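/- For every real constant C > 0 and every integer ν ≥ 1, the tail sum Σ_{l=2}^{ν} (C^l / l!) · (M(t)^l)_ν is at most λ^{-1}·(e^{Cλ} − 1 − Cλ)·M_ν, where (M(t)^l)_ν = Σ_{i₁+⋯+i_l = ν, each i_j ≥ 1} M_{i₁}⋯M_{i_l} is the degree-ν coefficient of M(t)^l. -/

import Mathlib

open Finset

lemma tuple_succ_sum (g : ℕ → ℝ) (l n : ℕ) :
    ∑ f ∈ Finset.Nat.antidiagonalTuple (l+1) n, ∏ j, g (f j)
      = ∑ p ∈ Finset.HasAntidiagonal.antidiagonal n, g p.1 *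
          ∑ f ∈ Finset.Nat.antidiagonalTuple l p.2, ∏ j, g (f j) := by
  simp_rw [Finset.mul_sum]
  rw [Finset.sum_sigma']
  refine Finset.sum_nbij'
    (fun (x : Fin (l+1) → ℕ) =>
      (⟨(x 0, ∑ i, Fin.tail x i), Fin.tail x⟩ : (_ : ℕ × ℕ) × (Fin l → ℕ)))
    (fun (x : (_ : ℕ × ℕ) × (Fin l → ℕ)) => Fin.cons x.1.1 x.2) ?_ ?_ ?_ ?_ ?_
  · intro f hf
    simp only [Finset.Nat.mem_antidiagonalTuple] at hf
    simp only [Finset.mem_sigma, Finset.mem_antidiagonal,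
      Finset.Nat.mem_antidiagonalTuple]
    refine ⟨?_, trivial⟩
    rw [← hf]
    simp [Fin.sum_univ_succ, Fin.tail]
  · rintro ⟨⟨a, b⟩, f⟩ h
    simp only [Finset.mem_sigma, Finset.mem_antidiagonal,
      Finset.Nat.mem_antidiagonalTuple] at h
    simp only [Finset.Nat.mem_antidiagonalTuple, Fin.sum_cons, h.2]
    exact Finset.HasAntidiagonal.mem_antidiagonal.mp h.1
  · intro f hf
    simp [Fin.cons_self_tail]
  · rintro ⟨⟨a, b⟩, f⟩ h
    simp only [Finset.mem_sigma, Finset.mem_antidiagonal,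
      Finset.Nat.mem_antidiagonalTuple] at h
    refine Sigma.ext ?_ ?_
    · simp [Fin.tail_cons, h.2]
    · simp [Fin.tail_cons]
  · intro f hf
    simp [Fin.prod_univ_succ, Fin.tail]

lemma inv_sq_sum_le (n : ℕ) :
    ∑ i ∈ Finset.range (n+1), (1:ℝ)/(i:ℝ)^2 ≤ 2 - 2/(n+1) := by
  induction n with
  | zero => norm_num
  | succ n ih =>
    rw [Finset.sum_range_succ]
    have h1 : (0:ℝ) < (n:ℝ) + 1 := by positivity
    have key : (1:ℝ)/((n:ℝ)+1)^2 + 2/((n:ℝ)+1+1) ≤ 2/((n:ℝ)+1) := by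
      rw [div_add_div _ _ (by positivity) (by positivity),
        div_le_div_iff₀ (by positivity) h1]
      nlinarith [sq_nonneg ((n:ℝ)+1)]
    push_cast
    linarith

lemma aux_frac (x y : ℝ) (hx : 1 ≤ x) (hy : 1 ≤ y) :
    (1:ℝ)/(x^2*y^2) ≤ 2/(x+y)^2 * ((1:ℝ)/x^2 + 1/y^2) := by
  have hx0 : (0:ℝ) < x := by linarith
  have hy0 : (0:ℝ) < y := by linarith
  have h1 : (x+y)^2 ≤ 2*(x^2+y^2) := by nlinarith [sq_nonneg (x-y)]
  rw [div_add_div _ _ (by positivity) (by positivity), div_mul_div_comm,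
    div_le_div_iff₀ (by positivity) (by positivity)]
  nlinarith [mul_le_mul_of_nonneg_right h1 (by positivity : (0:ℝ) ≤ x^2*y^2)]

lemma conv_le (c : ℝ) (hc : 0 < c) (M : ℕ → ℝ)
    (hM : ∀ ν : ℕ, M ν = 1 / (16 * c) * c ^ ν / (ν : ℝ) ^ 2) (n : ℕ) :
    ∑ p ∈ Finset.HasAntidiagonal.antidiagonal n, M p.1 * M p.2 ≤ (1/c) * M n := by
  have hM0 : M 0 = 0 := by rw [hM]; norm_num
  rcases Nat.eq_zero_or_pos n with rfl | hn
  · simp [hM0]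
  have hnR : (0:ℝ) < (n:ℝ) := by exact_mod_cast hn
  rw [Finset.Nat.sum_antidiagonal_eq_sum_range_succ_mk]
  have hterm : ∀ i ∈ Finset.range (n+1),
      M i * M (n - i) ≤ (1/(16*c))^2 * c^n * (2/(n:ℝ)^2) *
        ((1:ℝ)/(i:ℝ)^2 + 1/(((n-i : ℕ)):ℝ)^2) := by
    intro i hi
    rw [Finset.mem_range] at hi
    have hin : i ≤ n := by omega
    rcases Nat.eq_zero_or_pos i with rfl | hi1
    · rw [hM0]; simp only [zero_mul]; positivity
    rcases Nat.eq_or_lt_of_le hin with rfl | hilt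
    · rw [Nat.sub_self, hM0]; simp only [mul_zero]; positivity
    -- now 1 ≤ i ≤ n-1
    have hj1 : 1 ≤ n - i := by omega
    have hx : (1:ℝ) ≤ (i:ℝ) := by exact_mod_cast hi1
    have hy : (1:ℝ) ≤ ((n-i : ℕ):ℝ) := by exact_mod_cast hj1
    have hxy : (i:ℝ) + ((n-i:ℕ):ℝ) = (n:ℝ) := by
      push_cast [Nat.cast_sub hin]; ring
    have hcpow : c ^ i * c ^ (n-i) = c ^ n := by
      rw [← pow_add]; congr 1; omega
    have hcore : (1:ℝ)/((i:ℝ)^2 * ((n-i:ℕ):ℝ)^2)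
        ≤ (2/(n:ℝ)^2) * ((1:ℝ)/(i:ℝ)^2 + 1/(((n-i:ℕ)):ℝ)^2) := by
      rw [← hxy]
      have hxp : (0:ℝ) < (i:ℝ) := by linarith
      have hyp : (0:ℝ) < ((n-i:ℕ):ℝ) := by linarith
      exact aux_frac _ _ hx hy
    calc M i * M (n - i)
        = ((1/(16*c))^2 * c^n) * ((1:ℝ)/((i:ℝ)^2 * ((n-i:ℕ):ℝ)^2)) := by
          rw [hM i, hM (n-i), ← hcpow]; ring
      _ ≤ ((1/(16*c))^2 * c^n) *
          ((2/(n:ℝ)^2) * ((1:ℝ)/(i:ℝ)^2 + 1/(((n-i:ℕ)):ℝ)^2)) :=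
          mul_le_mul_of_nonneg_left hcore (by positivity)
      _ = (1/(16*c))^2 * c^n * (2/(n:ℝ)^2) *
          ((1:ℝ)/(i:ℝ)^2 + 1/(((n-i : ℕ)):ℝ)^2) := by ring
  calc ∑ i ∈ Finset.range (n+1), M i * M (n - i)
      ≤ ∑ i ∈ Finset.range (n+1), (1/(16*c))^2 * c^n * (2/(n:ℝ)^2) *
        ((1:ℝ)/(i:ℝ)^2 + 1/(((n-i : ℕ)):ℝ)^2) := Finset.sum_le_sum hterm
    _ = (1/(16*c))^2 * c^n * (2/(n:ℝ)^2) *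
        (∑ i ∈ Finset.range (n+1), (1:ℝ)/(i:ℝ)^2
          + ∑ i ∈ Finset.range (n+1), (1:ℝ)/(((n-i : ℕ)):ℝ)^2) := by
        rw [← Finset.mul_sum, Finset.sum_add_distrib]
    _ ≤ (1/(16*c))^2 * c^n * (2/(n:ℝ)^2) * 4 := by
        have hrefl : ∑ i ∈ Finset.range (n+1), (1:ℝ)/(((n-i : ℕ)):ℝ)^2
            = ∑ i ∈ Finset.range (n+1), (1:ℝ)/(i:ℝ)^2 := by
          have := Finset.sum_range_reflect (fun i => (1:ℝ)/(i:ℝ)^2) (n+1)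
          simpa using this
        rw [hrefl]
        have hs := inv_sq_sum_le n
        have h2 : ∑ i ∈ Finset.range (n+1), (1:ℝ)/(i:ℝ)^2 ≤ 2 := by
          have : (0:ℝ) < 2/((n:ℝ)+1) := by positivity
          linarith
        refine mul_le_mul_of_nonneg_left ?_ (by positivity)
        linarith
    _ ≤ (1/c) * M n := by
        rw [hM]
        have h1 : (1/(16*c))^2 * c^n * (2/(n:ℝ)^2) * 4
            = (c^n/(n:ℝ)^2) * (8/(256*c^2)) := by ring
        have h2 : (1/c) * (1 / (16 * c) * c ^ n / (n:ℝ) ^ 2)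
            = (c^n/(n:ℝ)^2) * (1/(16*c^2)) := by ring
        rw [h1, h2]
        refine mul_le_mul_of_nonneg_left ?_ (by positivity)
        rw [div_le_div_iff₀ (by positivity) (by positivity)]
        nlinarith [mul_pos hc hc]

lemma key_bound (c : ℝ) (hc : 0 < c) (M : ℕ → ℝ)
    (hM : ∀ ν : ℕ, M ν = 1 / (16 * c) * c ^ ν / (ν : ℝ) ^ 2) :
    ∀ l n : ℕ, ∑ f ∈ Finset.Nat.antidiagonalTuple (l+1) n, ∏ j, M (f j)
      ≤ (1/c)^l * M n := by
  have hMnn : ∀ k : ℕ, 0 ≤ M k := by intro k; rw [hM]; positivity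
  intro l
  induction l with
  | zero =>
    intro n
    rw [Finset.Nat.antidiagonalTuple_one, pow_zero, one_mul, Finset.sum_singleton]
    simp
  | succ l ih =>
    intro n
    rw [tuple_succ_sum]
    calc ∑ p ∈ Finset.HasAntidiagonal.antidiagonal n,
          M p.1 * ∑ f ∈ Finset.Nat.antidiagonalTuple (l+1) p.2, ∏ j, M (f j)
        ≤ ∑ p ∈ Finset.HasAntidiagonal.antidiagonal n, M p.1 * ((1/c)^l * M p.2) :=
          Finset.sum_le_sum fun p _ =>
            mul_le_mul_of_nonneg_left (ih p.2) (hMnn p.1)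
      _ = (1/c)^l * ∑ p ∈ Finset.HasAntidiagonal.antidiagonal n, M p.1 * M p.2 := by
          rw [Finset.mul_sum]; exact Finset.sum_congr rfl fun p _ => by ring
      _ ≤ (1/c)^l * ((1/c) * M n) :=
          mul_le_mul_of_nonneg_left (conv_le c hc M hM n) (by positivity)
      _ = (1/c)^(l+1) * M n := by ring



/-- Fix `c > 0`, `λ = 1/c`, and `M ν = (1/(16c))·c^ν/ν²`. For every real
constant `C > 0` and every integer `ν ≥ 1`, the tail sum
`∑_{l=2}^{ν} (C^l/l!)·(M(t)^l)_ν` is at most `λ⁻¹·(e^{Cλ} − 1 − Cλ)·M ν`, where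
`(M(t)^l)_ν = ∑_{i₁+⋯+i_l = ν, each i_j ≥ 1} M i₁ ⋯ M i_l` is the degree-`ν`
coefficient of `M(t)^l`. -/
theorem stmt_5 (c lam : ℝ) (hc : 0 < c) (hlam : lam = 1 / c)
    (M : ℕ → ℝ) (hM : ∀ ν : ℕ, M ν = 1 / (16 * c) * c ^ ν / (ν : ℝ) ^ 2) :
    ∀ C : ℝ, 0 < C → ∀ ν : ℕ, 1 ≤ ν →
      ∑ l ∈ Finset.Icc 2 ν,
        (C ^ l / (Nat.factorial l : ℝ)) *
          ∑ f ∈ (Finset.Nat.antidiagonalTuple l ν).filter (fun f => ∀ j, 1 ≤ f j),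
            ∏ j, M (f j)
      ≤ lam⁻¹ * (Real.exp (C * lam) - 1 - C * lam) * M ν := by
  intro C hC ν hν
  have hM0 : M 0 = 0 := by rw [hM]; norm_num
  have hMnn : ∀ k : ℕ, 0 ≤ M k := by intro k; rw [hM]; positivity
  set x : ℝ := C * lam with hxdef
  have hxc : x = C / c := by rw [hxdef, hlam]; ring
  have hx0 : 0 ≤ x := by rw [hxc]; positivity
  -- drop the filter
  have hfilter : ∀ l : ℕ,
      ∑ f ∈ (Finset.Nat.antidiagonalTuple l ν).filter (fun f => ∀ j, 1 ≤ f j),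
        ∏ j, M (f j)
      = ∑ f ∈ Finset.Nat.antidiagonalTuple l ν, ∏ j, M (f j) := by
    intro l
    refine Finset.sum_filter_of_ne ?_
    intro f _ hprod j
    by_contra hj
    apply hprod
    refine Finset.prod_eq_zero (Finset.mem_univ j) ?_
    have : f j = 0 := by omega
    rw [this, hM0]
  calc ∑ l ∈ Finset.Icc 2 ν,
        (C ^ l / (Nat.factorial l : ℝ)) *
          ∑ f ∈ (Finset.Nat.antidiagonalTuple l ν).filter (fun f => ∀ j, 1 ≤ f j),
            ∏ j, M (f j)
      ≤ ∑ l ∈ Finset.Icc 2 ν, c * M ν * (x ^ l / (Nat.factorial l : ℝ)) := by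
        refine Finset.sum_le_sum ?_
        intro l hl
        rw [Finset.mem_Icc] at hl
        rw [hfilter]
        obtain ⟨m, rfl⟩ : ∃ m, l = m + 1 := ⟨l - 1, by omega⟩
        have hkey := key_bound c hc M hM m ν
        have hfac : ((m+1).factorial : ℝ) ≠ 0 :=
          Nat.cast_ne_zero.mpr (Nat.factorial_ne_zero _)
        calc (C ^ (m+1) / ((m+1).factorial : ℝ)) *
              ∑ f ∈ Finset.Nat.antidiagonalTuple (m+1) ν, ∏ j, M (f j)
            ≤ (C ^ (m+1) / ((m+1).factorial : ℝ)) * ((1/c)^m * M ν) :=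
              mul_le_mul_of_nonneg_left hkey (by positivity)
          _ = c * M ν * (x ^ (m+1) / ((m+1).factorial : ℝ)) := by
              rw [hxc, div_pow]
              field_simp
              rw [div_pow, one_pow, mul_one, mul_div_assoc', eq_div_iff (by positivity)]; ring
      _ = c * M ν * ∑ l ∈ Finset.Icc 2 ν, x ^ l / (Nat.factorial l : ℝ) := by
        rw [Finset.mul_sum]
      _ ≤ c * M ν * (Real.exp x - 1 - x) := by
        refine mul_le_mul_of_nonneg_left ?_ (mul_nonneg hc.le (hMnn ν))
        have hsplit : ∑ l ∈ Finset.range (ν+1), x ^ l / (Nat.factorial l : ℝ)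
            = (1 + x) + ∑ l ∈ Finset.Icc 2 ν, x ^ l / (Nat.factorial l : ℝ) := by
          have h02 : ∑ l ∈ Finset.range 2, x ^ l / (Nat.factorial l : ℝ) = 1 + x := by
            simp [Finset.sum_range_succ]
          rw [Finset.range_eq_Ico, ← Finset.sum_Ico_consecutive _
            (by omega : 0 ≤ 2) (by omega : 2 ≤ ν + 1)]
          rw [← Finset.range_eq_Ico] at *
          rw [h02]
          congr 1
        have hexp := Real.sum_le_exp_of_nonneg hx0 (ν+1)
        linarith [hsplit ▸ hexp]
      _ = lam⁻¹ * (Real.exp x - 1 - x) * M ν := by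
        rw [hlam, one_div, inv_inv]
        ring
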